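/- Consider the family of quartic curves with a tacnode C_{a,b} : y²(x − a)² − byx² + x⁴ = 0, indexed by real parameters a ∈ ℝ and b > 0, with projective closures x₁²(x₀ − a x₂)² − b x₁ x₀² x₂ + x₀⁴ = 0 in ℙ²(ℂ). Then for every (x₀,x₁,x₂) ∈ ℂ³ \ {(0,0,0)}, one has x₁²(x₀ − a x₂)² − b x₁ x₀² x₂ + x₀⁴ = 0 for all a ∈ ℝ and all b > 0 if and only if the point [x₀:x₁:x₂] is one of [0:0:1], [0:1:0], [i:1:0], [−i:1:0]. Consequently #B(ℂ) = 4 and ν_opt = d² − #B(ℂ) + 1 = 16 − 4 + 1 = 13. -/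
import Mathlib


noncomputable section

/-- The base locus in `ℙ²(ℂ)` of the family of projective quartics with a tacnode
`x₁²(x₀ − a x₂)² − b x₁ x₀² x₂ + x₀⁴ = 0`, `a ∈ ℝ`, `b > 0`. -/
def tacnodeQuarticBaseLocus : Set (Projectivization ℂ (Fin 3 → ℂ)) :=
  {P | ∀ a b : ℝ, 0 < b →
    (P.rep 1) ^ 2 * (P.rep 0 - (a : ℂ) * P.rep 2) ^ 2
      - (b : ℂ) * P.rep 1 * (P.rep 0) ^ 2 * P.rep 2 + (P.rep 0) ^ 4 = 0}

section TacnodeAux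

/-- The point `[0:0:1]`. -/
def tp0 : Projectivization ℂ (Fin 3 → ℂ) :=
  Projectivization.mk ℂ (![0, 0, 1] : Fin 3 → ℂ) (by intro h; have := congrFun h 2; simp at this)
/-- The point `[0:1:0]`. -/
def tp1 : Projectivization ℂ (Fin 3 → ℂ) :=
  Projectivization.mk ℂ (![0, 1, 0] : Fin 3 → ℂ) (by intro h; have := congrFun h 1; simp at this)
/-- The point `[i:1:0]`. -/
def tp2 : Projectivization ℂ (Fin 3 → ℂ) :=
  Projectivization.mk ℂ (![Complex.I, 1, 0] : Fin 3 → ℂ)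
    (by intro h; have := congrFun h 1; simp at this)
/-- The point `[−i:1:0]`. -/
def tp3 : Projectivization ℂ (Fin 3 → ℂ) :=
  Projectivization.mk ℂ (![-Complex.I, 1, 0] : Fin 3 → ℂ)
    (by intro h; have := congrFun h 1; simp at this)

theorem tacnode_key (v : Fin 3 → ℂ) (hv : v ≠ 0) :
    (∀ a b : ℝ, 0 < b →
        (v 1) ^ 2 * (v 0 - (a : ℂ) * v 2) ^ 2
          - (b : ℂ) * v 1 * (v 0) ^ 2 * v 2 + (v 0) ^ 4 = 0) ↔
      (Projectivization.mk ℂ v hv = tp0 ∨ Projectivization.mk ℂ v hv = tp1 ∨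
       Projectivization.mk ℂ v hv = tp2 ∨ Projectivization.mk ℂ v hv = tp3) := by
  have cond_iff : (∀ a b : ℝ, 0 < b →
        (v 1) ^ 2 * (v 0 - (a : ℂ) * v 2) ^ 2
          - (b : ℂ) * v 1 * (v 0) ^ 2 * v 2 + (v 0) ^ 4 = 0) ↔
      (v 1 * v 2 = 0 ∧ v 0 ^ 2 * (v 1 ^ 2 + v 0 ^ 2) = 0) := by
    constructor
    · intro h
      have h01 := h 0 1 one_pos
      have h02 := h 0 2 two_pos
      have h11 := h 1 1 one_pos
      have hm11 := h (-1) 1 one_pos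
      push_cast at h01 h02 h11 hm11
      have e1 : v 1 * v 0 ^ 2 * v 2 = 0 := by linear_combination h01 - h02
      have e2 : v 0 ^ 2 * (v 1 ^ 2 + v 0 ^ 2) = 0 := by linear_combination h01 + e1
      have e3 : (v 1 * v 2) ^ 2 = 0 := by linear_combination (h11 + hm11 - 2 * h01) / 2
      exact ⟨pow_eq_zero_iff two_ne_zero |>.mp e3, e2⟩
    · rintro ⟨e1, e2⟩ a b _
      linear_combination ((a:ℂ)^2 * v 1 * v 2 - 2*(a:ℂ)*(v 0)*(v 1) - (b:ℂ)*(v 0)^2) * e1 + e2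
  rw [cond_iff]
  unfold tp0 tp1 tp2 tp3
  constructor
  · rintro ⟨e1, e2⟩
    rcases mul_eq_zero.mp e1 with h1 | h2
    · -- v 1 = 0
      have h0 : v 0 = 0 := by
        have h4 : v 0 ^ 4 = 0 := by
          linear_combination e2 - v 0 ^ 2 * (v 1 + v 0) * h1 + v 0 ^ 2 * v 0 * h1
        exact pow_eq_zero_iff (by norm_num) |>.mp h4
      have h2 : v 2 ≠ 0 := by
        intro h2; apply hv; funext i; fin_cases i <;> simp [h0, h1, h2]
      left
      rw [Projectivization.mk_eq_mk_iff]
      exact ⟨Units.mk0 (v 2) h2, by funext i; fin_cases i <;> simp [h0, h1, Units.smul_def]⟩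
    · -- v 2 = 0
      rcases mul_eq_zero.mp e2 with h0 | hsum
      · have h0 : v 0 = 0 := pow_eq_zero_iff two_ne_zero |>.mp h0
        have h1 : v 1 ≠ 0 := by
          intro h1; apply hv; funext i; fin_cases i <;> simp [h0, h1, h2]
        right; left
        rw [Projectivization.mk_eq_mk_iff]
        exact ⟨Units.mk0 (v 1) h1, by funext i; fin_cases i <;> simp [h0, h2, Units.smul_def]⟩
      · have h1 : v 1 ≠ 0 := by
          intro h1
          have h0 : v 0 = 0 := by
            have : v 0 ^ 2 = 0 := by linear_combination hsum - (v 1) * h1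
            exact pow_eq_zero_iff two_ne_zero |>.mp this
          apply hv; funext i; fin_cases i <;> simp [h0, h1, h2]
        have hfac : (v 0 - Complex.I * v 1) * (v 0 + Complex.I * v 1) = 0 := by
          linear_combination hsum - v 1 ^ 2 * Complex.I_sq
        rcases mul_eq_zero.mp hfac with hI | hI
        · right; right; left
          rw [Projectivization.mk_eq_mk_iff]
          refine ⟨Units.mk0 (v 1) h1, ?_⟩
          funext i; fin_cases i <;>
            simp [h2, Units.smul_def, mul_comm]
          · linear_combination -hI
        · right; right; right
          rw [Projectivization.mk_eq_mk_iff]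
          refine ⟨Units.mk0 (v 1) h1, ?_⟩
          funext i; fin_cases i <;>
            simp [h2, Units.smul_def, mul_comm]
          · linear_combination -hI
  · intro h
    rcases h with h | h | h | h <;>
      obtain ⟨u, hu⟩ := (Projectivization.mk_eq_mk_iff ℂ _ _ _ _).mp h <;>
      [skip; skip; skip; skip]
    · have h0 := congrFun hu 0; have h1 := congrFun hu 1
      simp [Units.smul_def] at h0 h1
      constructor
      · rw [← h1]; ring
      · rw [← h0]; ring
    · have h0 := congrFun hu 0; have h2 := congrFun hu 2
      simp [Units.smul_def] at h0 h2
      constructor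
      · rw [← h2]; ring
      · rw [← h0]; ring
    · have h0 := congrFun hu 0; have h1 := congrFun hu 1; have h2 := congrFun hu 2
      simp [Units.smul_def] at h0 h1 h2
      constructor
      · rw [← h2]; ring
      · rw [← h0, ← h1]
        linear_combination (u:ℂ)^4 * Complex.I^2 * Complex.I_sq
    · have h0 := congrFun hu 0; have h1 := congrFun hu 1; have h2 := congrFun hu 2
      simp [Units.smul_def] at h0 h1 h2
      constructor
      · rw [← h2]; ring
      · rw [← h0, ← h1]
        linear_combination (u:ℂ)^4 * Complex.I^2 * Complex.I_sq

lemma tne01 : tp0 ≠ tp1 := by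
  intro h
  obtain ⟨u, hu⟩ := (Projectivization.mk_eq_mk_iff ℂ _ _ _ _).mp h
  have := congrFun hu 1; simp [Units.smul_def] at this

lemma tne02 : tp0 ≠ tp2 := by
  intro h
  obtain ⟨u, hu⟩ := (Projectivization.mk_eq_mk_iff ℂ _ _ _ _).mp h
  have := congrFun hu 1; simp [Units.smul_def] at this

lemma tne03 : tp0 ≠ tp3 := by
  intro h
  obtain ⟨u, hu⟩ := (Projectivization.mk_eq_mk_iff ℂ _ _ _ _).mp h
  have := congrFun hu 1; simp [Units.smul_def] at this

lemma tne12 : tp1 ≠ tp2 := by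
  intro h
  obtain ⟨u, hu⟩ := (Projectivization.mk_eq_mk_iff ℂ _ _ _ _).mp h
  have := congrFun hu 0; simp [Units.smul_def, Complex.I_ne_zero] at this

lemma tne13 : tp1 ≠ tp3 := by
  intro h
  obtain ⟨u, hu⟩ := (Projectivization.mk_eq_mk_iff ℂ _ _ _ _).mp h
  have := congrFun hu 0; simp [Units.smul_def, Complex.I_ne_zero] at this

lemma tne23 : tp2 ≠ tp3 := by
  intro h
  obtain ⟨u, hu⟩ := (Projectivization.mk_eq_mk_iff ℂ _ _ _ _).mp h
  have h0 := congrFun hu 0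
  have h1 := congrFun hu 1
  simp [Units.smul_def] at h0 h1
  rw [h1] at h0
  simp only [Units.val_one, one_mul] at h0
  exact Complex.I_ne_zero (by linear_combination -h0 / 2)

lemma tcard4 : ({tp0, tp1, tp2, tp3} : Set (Projectivization ℂ (Fin 3 → ℂ))).ncard = 4 := by
  rw [Set.ncard_insert_of_notMem (by simp [tne01, tne02, tne03]),
    Set.ncard_insert_of_notMem (by simp [tne12, tne13]),
    Set.ncard_pair tne23]

lemma tlocus_eq : tacnodeQuarticBaseLocus = {tp0, tp1, tp2, tp3} := by
  ext P
  have hP := tacnode_key P.rep (Projectivization.rep_nonzero P)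
  rw [Projectivization.mk_rep] at hP
  simpa [tacnodeQuarticBaseLocus, Set.mem_insert_iff] using hP

end TacnodeAux

/-- quartic with a tacnode. A nonzero `(x₀,x₁,x₂) ∈ ℂ³` satisfies
`x₁²(x₀ − a x₂)² − b x₁ x₀² x₂ + x₀⁴ = 0` for all `a ∈ ℝ` and all `b > 0` iff the point
`[x₀:x₁:x₂]` is one of `[0:0:1]`, `[0:1:0]`, `[i:1:0]`, `[−i:1:0]`; consequently
`#B(ℂ) = 4` and `ν_opt = 4² − 4 + 1 = 13`. -/
theorem statement14 :
    (∀ v : Fin 3 → ℂ, (hv : v ≠ 0) →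
      ((∀ a b : ℝ, 0 < b →
          (v 1) ^ 2 * (v 0 - (a : ℂ) * v 2) ^ 2
            - (b : ℂ) * v 1 * (v 0) ^ 2 * v 2 + (v 0) ^ 4 = 0) ↔
        (Projectivization.mk ℂ v hv = Projectivization.mk ℂ (![0, 0, 1] : Fin 3 → ℂ)
            (by intro h; have := congrFun h 2; simp at this) ∨
         Projectivization.mk ℂ v hv = Projectivization.mk ℂ (![0, 1, 0] : Fin 3 → ℂ)
            (by intro h; have := congrFun h 1; simp at this) ∨
         Projectivization.mk ℂ v hv = Projectivization.mk ℂ (![Complex.I, 1, 0] : Fin 3 → ℂ)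
            (by intro h; have := congrFun h 1; simp at this) ∨
         Projectivization.mk ℂ v hv = Projectivization.mk ℂ (![-Complex.I, 1, 0] : Fin 3 → ℂ)
            (by intro h; have := congrFun h 1; simp at this)))) ∧
    tacnodeQuarticBaseLocus.ncard = 4 ∧
    4 ^ 2 - tacnodeQuarticBaseLocus.ncard + 1 = 13 := by
  refine ⟨fun v hv => tacnode_key v hv, ?_, ?_⟩ <;>
    rw [tlocus_eq, tcard4] <;> norm_num

end
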